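/- Let 𝒢 be a class of left R-modules that is closed under kernels of epimorphisms and under countable direct sums. Then 𝒢 is closed under direct summands: if M ⊕ N ∈ 𝒢 then M ∈ 𝒢. -/

import Mathlib

open CategoryTheory CategoryTheory.Limits

set_option autoImplicit false

universe u

variable {R : Type u} [Ring R]

/-- A short exact sequence of `R`-modules encoded by two linear maps. -/
def IsSES {A B C : ModuleCat.{u} R} (f : A →ₗ[R] B) (g : B →ₗ[R] C) : Prop :=
  Function.Injective f ∧ Function.Exact f g ∧ Function.Surjective g

open DirectSum

section Aux

variable (R) in
/-- Splitting off the `none` component of a direct sum over `Option ℕ`. -/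
noncomputable def optSplit (A : Type u) [AddCommGroup A] [Module R A] :
    (⨁ _ : Option ℕ, A) ≃ₗ[R] A × ⨁ _ : ℕ, A :=
  { DFinsupp.equivProdDFinsupp with
    map_add' := DFinsupp.equivProdDFinsupp_add
    map_smul' := fun r f => DFinsupp.equivProdDFinsupp_smul r f }

variable (R) in
/-- Eilenberg shift: a countable direct sum of copies of `A` splits off one copy. -/
noncomputable def shiftEquiv (A : Type u) [AddCommGroup A] [Module R A] :
    (⨁ _ : ℕ, A) ≃ₗ[R] A × ⨁ _ : ℕ, A :=
  (DirectSum.lequivCongrLeft (M := fun _ : ℕ => A)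
      R ((Denumerable.eqv (Option ℕ)).symm)).trans (optSplit R A)

@[simp] theorem mapRange_linearMap_apply {ι : Type} [DecidableEq ι]
    {β₁ β₂ : ι → Type u} [∀ i, AddCommGroup (β₁ i)] [∀ i, AddCommGroup (β₂ i)]
    [∀ i, Module R (β₁ i)] [∀ i, Module R (β₂ i)]
    (f : ∀ i, β₁ i →ₗ[R] β₂ i) (x : Π₀ i, β₁ i) (i : ι) :
    DFinsupp.mapRange.linearMap f x i = f i (x i) :=
  DFinsupp.mapRange_apply _ (fun i => (f i).map_zero) x i

@[simp] theorem mapRange_linearMap_apply' {ι : Type} [DecidableEq ι]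
    {β₁ β₂ : ι → Type u} [∀ i, AddCommGroup (β₁ i)] [∀ i, AddCommGroup (β₂ i)]
    [∀ i, Module R (β₁ i)] [∀ i, Module R (β₂ i)]
    (f : ∀ i, β₁ i →ₗ[R] β₂ i) (x : ⨁ i, β₁ i) (i : ι) :
    (DFinsupp.mapRange.linearMap f x : ⨁ i, β₂ i) i = f i (x i) :=
  DFinsupp.mapRange_apply _ (fun i => (f i).map_zero) x i

variable (R) in
/-- A direct sum of products splits as a product of direct sums. -/
noncomputable def prodSplit (A B : Type u) [AddCommGroup A] [Module R A]
    [AddCommGroup B] [Module R B] :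
    (Π₀ _ : ℕ, (A × B)) ≃ₗ[R] (Π₀ _ : ℕ, A) × (Π₀ _ : ℕ, B) :=
  LinearEquiv.ofLinear
    (LinearMap.prod
      (DFinsupp.mapRange.linearMap fun _ : ℕ => LinearMap.fst R A B)
      (DFinsupp.mapRange.linearMap fun _ : ℕ => LinearMap.snd R A B))
    (LinearMap.coprod
      (DFinsupp.mapRange.linearMap fun _ : ℕ => LinearMap.inl R A B)
      (DFinsupp.mapRange.linearMap fun _ : ℕ => LinearMap.inr R A B))
    (by
      refine LinearMap.ext fun p => Prod.ext ?_ ?_ <;>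
      · refine DFinsupp.ext fun i => ?_
        simp only [LinearMap.comp_apply, LinearMap.coprod_apply, LinearMap.prod_apply,
          Function.prod, LinearMap.id_apply]
        rw [map_add, DFinsupp.add_apply, mapRange_linearMap_apply, mapRange_linearMap_apply,
          mapRange_linearMap_apply, mapRange_linearMap_apply]
        simp)
    (by
      refine LinearMap.ext fun x => DFinsupp.ext fun i => ?_
      simp only [LinearMap.comp_apply, LinearMap.coprod_apply, LinearMap.prod_apply,
        Function.prod, LinearMap.id_apply]
      rw [DFinsupp.add_apply, mapRange_linearMap_apply, mapRange_linearMap_apply,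
        mapRange_linearMap_apply, mapRange_linearMap_apply]
      exact Prod.ext (by simp) (by simp))

end Aux

/-- A class of modules closed under kernels of epimorphisms and countable
direct sums is closed under direct summands. -/
theorem statement3 (𝒢 : ModuleCat.{u} R → Prop)
    (hker : ∀ (A B C : ModuleCat.{u} R) (f : A →ₗ[R] B) (g : B →ₗ[R] C),
      IsSES f g → 𝒢 B → 𝒢 C → 𝒢 A)
    (hsum : ∀ (P : ℕ → ModuleCat.{u} R), (∀ i, 𝒢 (P i)) → 𝒢 (ModuleCat.of R (⨁ i, P i)))
    (M N : ModuleCat.{u} R) (h : 𝒢 (ModuleCat.of R (M × N))) : 𝒢 M := by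
  -- the big module
  set Sty := (⨁ _ : ℕ, (↥M × ↥N)) with hSty
  have hS : 𝒢 (ModuleCat.of R Sty) :=
    hsum (fun _ => ModuleCat.of R (↥M × ↥N)) (fun _ => h)
  -- the Eilenberg swindle equivalence `S ≃ M × S`
  have e : Sty ≃ₗ[R] ↥M × Sty :=
    prodSplit R ↥M ↥N ≪≫ₗ
      (shiftEquiv R ↥M).prodCongr (LinearEquiv.refl R _) ≪≫ₗ
        LinearEquiv.prodAssoc R _ _ _ ≪≫ₗ
          (LinearEquiv.refl R ↥M).prodCongr (prodSplit R ↥M ↥N).symm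
  -- the short exact sequence `0 → M → S → S → 0`
  let f : ↥M →ₗ[R] Sty := e.symm.toLinearMap.comp (LinearMap.inl R ↥M Sty)
  let g : Sty →ₗ[R] Sty := (LinearMap.snd R ↥M Sty).comp e.toLinearMap
  have hses : IsSES (A := M) (B := ModuleCat.of R Sty) (C := ModuleCat.of R Sty) f g := by
    refine ⟨?_, ?_, ?_⟩
    · intro a b hab
      have := e.symm.injective hab
      simpa using congrArg Prod.fst this
    · intro x
      constructor
      · intro hx
        refine ⟨(e x).1, ?_⟩
        have : e x = ((e x).1, (0 : Sty)) := Prod.ext rfl hx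
        show e.symm ((LinearMap.inl R ↥M Sty) (e x).1) = x
        rw [LinearMap.inl_apply, ← this]
        exact e.symm_apply_apply x
      · rintro ⟨m, rfl⟩
        show (LinearMap.snd R ↥M Sty) (e (e.symm (LinearMap.inl R ↥M Sty m))) = 0
        rw [e.apply_symm_apply, LinearMap.inl_apply, LinearMap.snd_apply]
    · intro s
      refine ⟨e.symm (0, s), ?_⟩
      show (LinearMap.snd R ↥M Sty) (e (e.symm (0, s))) = s
      rw [e.apply_symm_apply, LinearMap.snd_apply]
  exact hker M (ModuleCat.of R Sty) (ModuleCat.of R Sty) f g hses hS hS
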